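/- Let γ ∈ (0,1), θ = log(1/γ), and (Q_n)_{n≥1} iid nonnegative random variables such that liminf_{t→∞} t·P(log Q₁ > t) > θ. Then for every t ≥ 0, Σ_{n≥1} P(Σ_{k=1}^n γ^{k-1} Q_k ≤ e^t) < ∞. -/

import Mathlib

open MeasureTheory ProbabilityTheory Filter

theorem stmt_6 {Ω : Type*} [MeasureSpace Ω] [IsProbabilityMeasure (ℙ : Measure Ω)]
    (γ θ : ℝ) (hγ : γ ∈ Set.Ioo (0 : ℝ) 1) (hθ : θ = Real.log (1 / γ))
    (Q : ℕ → Ω → ℝ) (hQmeas : ∀ n, Measurable (Q n)) (hQ0 : ∀ n ω, 0 ≤ Q n ω)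
    (hindep : iIndepFun Q ℙ)
    (hident : ∀ n, IdentDistrib (Q n) (Q 1) ℙ ℙ)
    (htail : Filter.liminf
        (fun t : ℝ => ENNReal.ofReal t * ℙ {ω | t < Real.log (Q 1 ω)}) atTop
      > ENNReal.ofReal θ) :
    ∀ t : ℝ, 0 ≤ t →
      (∑' n : ℕ,
        ℙ {ω | ∑ k ∈ Finset.Icc 1 (n + 1), γ ^ (k - 1) * Q k ω ≤ Real.exp t}) < ⊤ := by
  intro t ht
  obtain ⟨hγ0, hγ1⟩ := hγ
  have hθpos : 0 < θ := by
    rw [hθ]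
    apply Real.log_pos
    rw [lt_div_iff₀ hγ0]; linarith
  have hγexp : γ = Real.exp (-θ) := by
    rw [hθ, one_div, Real.log_inv, neg_neg, Real.exp_log hγ0]
  -- obtain the tail constant c > θ
  obtain ⟨r, hr1, hr2⟩ := exists_between htail
  have hrtop : r < ⊤ := lt_of_lt_of_le hr2 le_top
  set c := r.toReal with hc
  have hcθ : θ < c := by
    have h := (ENNReal.toReal_lt_toReal ENNReal.ofReal_ne_top hrtop.ne).2 hr1
    rwa [ENNReal.toReal_ofReal hθpos.le] at h
  have hcpos : 0 < c := lt_trans hθpos hcθ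
  have hev : ∀ᶠ x : ℝ in atTop, r < ENNReal.ofReal x * ℙ {ω | x < Real.log (Q 1 ω)} :=
    eventually_lt_of_lt_liminf hr2
  obtain ⟨s0', hs0'⟩ := Filter.eventually_atTop.1 hev
  set s0 : ℝ := max s0' 1 with hs0def
  have hs0one : (1 : ℝ) ≤ s0 := le_max_right _ _
  have htail' : ∀ x : ℝ, s0 ≤ x → c / x ≤ (ℙ {ω | x < Real.log (Q 1 ω)}).toReal := by
    intro x hx
    have hxpos : 0 < x := lt_of_lt_of_le one_pos (le_trans hs0one hx)
    have h := hs0' x (le_trans (le_max_left _ _) hx)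
    have hfin : ENNReal.ofReal x * ℙ {ω | x < Real.log (Q 1 ω)} ≠ ⊤ :=
      ENNReal.mul_ne_top ENNReal.ofReal_ne_top (measure_ne_top _ _)
    have h2 : c ≤ x * (ℙ {ω | x < Real.log (Q 1 ω)}).toReal := by
      have h3 := (ENNReal.toReal_le_toReal hrtop.ne hfin).2 h.le
      rwa [ENNReal.toReal_mul, ENNReal.toReal_ofReal hxpos.le] at h3
    rw [div_le_iff₀ hxpos]
    linarith [h2]
  set p : ℝ := c / θ with hp
  have hp1 : 1 < p := (one_lt_div hθpos).2 hcθ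
  have hppos : 0 < p := lt_trans one_pos hp1
  set Mn : ℕ := ⌈s0 / θ⌉₊ with hMn
  have hMs : ∀ k : ℕ, Mn + 1 ≤ k → s0 ≤ t + ((k : ℝ) - 1) * θ := by
    intro k hk
    have h1 : s0 / θ ≤ (Mn : ℝ) := Nat.le_ceil _
    have h2 : (Mn : ℝ) ≤ (k : ℝ) - 1 := by
      have : (Mn : ℝ) + 1 ≤ (k : ℝ) := by exact_mod_cast hk
      linarith
    have h3 : s0 ≤ ((k : ℝ) - 1) * θ := by
      have := (div_le_iff₀ hθpos).1 (le_trans h1 h2)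
      linarith
    linarith
  -- abbreviations
  set ρ : ℕ → ℝ := fun k =>
    (ℙ (Q 1 ⁻¹' Set.Iic (Real.exp (t + ((k : ℝ) - 1) * θ)))).toReal with hρ
  have hρ0 : ∀ k, 0 ≤ ρ k := fun k => ENNReal.toReal_nonneg
  have hρ1 : ∀ k, ρ k ≤ 1 := by
    intro k
    have := ENNReal.toReal_mono ENNReal.one_ne_top
      (prob_le_one (μ := (ℙ : Measure Ω)) (s := Q 1 ⁻¹' Set.Iic (Real.exp (t + ((k : ℝ) - 1) * θ))))
    simpa using this
  -- Step 1: probability of the event is at most the product of the ρ's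
  have hEbound : ∀ n : ℕ,
      (ℙ {ω | ∑ k ∈ Finset.Icc 1 (n + 1), γ ^ (k - 1) * Q k ω ≤ Real.exp t}).toReal ≤
        ∏ k ∈ Finset.Icc 1 (n + 1), ρ k := by
    intro n
    have hsub : {ω | ∑ k ∈ Finset.Icc 1 (n + 1), γ ^ (k - 1) * Q k ω ≤ Real.exp t} ⊆
        ⋂ k ∈ Finset.Icc 1 (n + 1), Q k ⁻¹' Set.Iic (Real.exp (t + ((k : ℝ) - 1) * θ)) := by
      intro ω hω
      simp only [Set.mem_iInter]
      intro k hk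
      have hk1 : 1 ≤ k := (Finset.mem_Icc.1 hk).1
      have hterm : γ ^ (k - 1) * Q k ω ≤ Real.exp t :=
        le_trans (Finset.single_le_sum
          (f := fun i => γ ^ (i - 1) * Q i ω)
          (fun i _ => mul_nonneg (pow_nonneg hγ0.le _) (hQ0 i ω)) hk) hω
      have hcast : ((k - 1 : ℕ) : ℝ) = (k : ℝ) - 1 := by
        push_cast [Nat.cast_sub hk1]
        ring
      have hpow : γ ^ (k - 1) = Real.exp (-(((k : ℝ) - 1) * θ)) := by
        rw [hγexp, ← Real.exp_nat_mul, hcast]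
        ring_nf
      rw [hpow] at hterm
      show Q k ω ∈ Set.Iic (Real.exp (t + ((k : ℝ) - 1) * θ))
      rw [Set.mem_Iic]
      have h1 : Q k ω ≤ Real.exp t / Real.exp (-(((k : ℝ) - 1) * θ)) := by
        rw [le_div_iff₀ (Real.exp_pos _)]
        linarith [hterm]
      calc Q k ω ≤ Real.exp t / Real.exp (-(((k : ℝ) - 1) * θ)) := h1
        _ = Real.exp (t + ((k : ℝ) - 1) * θ) := by
            rw [← Real.exp_sub]; ring_nf
    have hmeas : ∀ k ∈ Finset.Icc 1 (n + 1),
        MeasurableSet[MeasurableSpace.comap (Q k) inferInstance]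
          (Q k ⁻¹' Set.Iic (Real.exp (t + ((k : ℝ) - 1) * θ))) :=
      fun k _ => ⟨Set.Iic _, measurableSet_Iic, rfl⟩
    have hprodeq := hindep.meas_biInter hmeas
    have hfin : (∏ k ∈ Finset.Icc 1 (n + 1),
        ℙ (Q k ⁻¹' Set.Iic (Real.exp (t + ((k : ℝ) - 1) * θ)))) ≠ ⊤ := by
      refine (ENNReal.prod_lt_top ?_).ne
      exact fun k _ => measure_lt_top _ _
    calc (ℙ {ω | ∑ k ∈ Finset.Icc 1 (n + 1), γ ^ (k - 1) * Q k ω ≤ Real.exp t}).toReal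
        ≤ (ℙ (⋂ k ∈ Finset.Icc 1 (n + 1),
            Q k ⁻¹' Set.Iic (Real.exp (t + ((k : ℝ) - 1) * θ)))).toReal := by
          apply ENNReal.toReal_mono (measure_ne_top _ _) (measure_mono hsub)
      _ = (∏ k ∈ Finset.Icc 1 (n + 1),
            ℙ (Q k ⁻¹' Set.Iic (Real.exp (t + ((k : ℝ) - 1) * θ)))).toReal := by
          rw [hprodeq]
      _ = ∏ k ∈ Finset.Icc 1 (n + 1),
            (ℙ (Q k ⁻¹' Set.Iic (Real.exp (t + ((k : ℝ) - 1) * θ)))).toReal :=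
          ENNReal.toReal_prod _ _
      _ = ∏ k ∈ Finset.Icc 1 (n + 1), ρ k := by
          refine Finset.prod_congr rfl fun k _ => ?_
          rw [hρ]
          rw [(hident k).measure_mem_eq measurableSet_Iic]
  -- Step 2: exponential bound on ρ k for large k
  have hρexp : ∀ k : ℕ, Mn + 1 ≤ k →
      ρ k ≤ Real.exp (-(c / (t + ((k : ℝ) - 1) * θ))) := by
    intro k hk
    set x : ℝ := t + ((k : ℝ) - 1) * θ with hx
    have hxs0 : s0 ≤ x := hMs k hk
    have hxpos : 0 < x := lt_of_lt_of_le (lt_of_lt_of_le one_pos hs0one) hxs0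
    have hmeasset : MeasurableSet {ω | x < Real.log (Q 1 ω)} := by
      have heq : {ω | x < Real.log (Q 1 ω)} = (fun ω => Real.log (Q 1 ω)) ⁻¹' Set.Ioi x := rfl
      rw [heq]
      exact (Real.measurable_log.comp (hQmeas 1)) measurableSet_Ioi
    have hsub : Q 1 ⁻¹' Set.Iic (Real.exp x) ⊆ {ω | x < Real.log (Q 1 ω)}ᶜ := by
      intro ω hω
      simp only [Set.mem_compl_iff, Set.mem_setOf_eq, not_lt]
      rcases eq_or_lt_of_le (hQ0 1 ω) with h0 | h0
      · rw [← h0, Real.log_zero]; exact hxpos.le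
      · have hQle : Q 1 ω ≤ Real.exp x := hω
        calc Real.log (Q 1 ω) ≤ Real.log (Real.exp x) := Real.log_le_log h0 hQle
          _ = x := Real.log_exp x
    have h1 : ℙ (Q 1 ⁻¹' Set.Iic (Real.exp x)) ≤ 1 - ℙ {ω | x < Real.log (Q 1 ω)} := by
      rw [← prob_compl_eq_one_sub hmeasset]
      exact measure_mono hsub
    have h2 : ρ k ≤ 1 - (ℙ {ω | x < Real.log (Q 1 ω)}).toReal := by
      have h3 := ENNReal.toReal_mono
        (by
          exact ne_top_of_le_ne_top ENNReal.one_ne_top tsub_le_self) h1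
      rwa [ENNReal.toReal_sub_of_le prob_le_one ENNReal.one_ne_top, ENNReal.toReal_one] at h3
    have h4 := htail' x hxs0
    calc ρ k ≤ 1 - (ℙ {ω | x < Real.log (Q 1 ω)}).toReal := h2
      _ ≤ 1 - c / x := by linarith
      _ ≤ Real.exp (-(c / x)) := by linarith [Real.add_one_le_exp (-(c / x))]
  -- Step 3: telescoping lower bound for the sum of c / s_k
  have hterm : ∀ k : ℕ, Mn + 1 ≤ k →
      p * (Real.log (t + (k : ℝ) * θ) - Real.log (t + ((k : ℝ) - 1) * θ)) ≤
        c / (t + ((k : ℝ) - 1) * θ) := by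
    intro k hk
    set a : ℝ := t + ((k : ℝ) - 1) * θ with ha
    have has0 : s0 ≤ a := hMs k hk
    have hapos : 0 < a := lt_of_lt_of_le (lt_of_lt_of_le one_pos hs0one) has0
    have hb : t + (k : ℝ) * θ = a + θ := by rw [ha]; ring
    have hbpos : 0 < a + θ := by linarith
    have hlog : Real.log (a + θ) - Real.log a ≤ θ / a := by
      rw [← Real.log_div hbpos.ne' hapos.ne']
      have h1 : Real.log ((a + θ) / a) ≤ (a + θ) / a - 1 :=
        Real.log_le_sub_one_of_pos (div_pos hbpos hapos)
      have h2 : (a + θ) / a - 1 = θ / a := by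
        field_simp
        ring
      linarith
    have hpθ : p * (θ / a) = c / a := by
      rw [hp]
      field_simp
    rw [hb]
    nlinarith [hlog, hppos.le]
  have htel : ∀ n : ℕ, Mn ≤ n →
      ∑ k ∈ Finset.Ioc Mn (n + 1),
          (Real.log (t + (k : ℝ) * θ) - Real.log (t + ((k : ℝ) - 1) * θ)) =
        Real.log (t + ((n : ℝ) + 1) * θ) - Real.log (t + (Mn : ℝ) * θ) := by
    intro n hn
    have hIoc : Finset.Ioc Mn (n + 1) = Finset.Ico (Mn + 1) (n + 2) := by
      ext x; simp only [Finset.mem_Ioc, Finset.mem_Ico]; omega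
    rw [hIoc, Finset.sum_Ico_eq_sum_range]
    have hN : n + 2 - (Mn + 1) = n + 1 - Mn := by omega
    rw [hN]
    have key := Finset.sum_range_sub
      (f := fun j : ℕ => Real.log (t + ((Mn : ℝ) + (j : ℝ)) * θ)) (n + 1 - Mn)
    calc ∑ j ∈ Finset.range (n + 1 - Mn),
          (Real.log (t + ((Mn + 1 + j : ℕ) : ℝ) * θ) -
            Real.log (t + (((Mn + 1 + j : ℕ) : ℝ) - 1) * θ))
        = ∑ j ∈ Finset.range (n + 1 - Mn),
          (Real.log (t + ((Mn : ℝ) + ((j : ℝ) + 1)) * θ) -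
            Real.log (t + ((Mn : ℝ) + (j : ℝ)) * θ)) := by
          refine Finset.sum_congr rfl fun j _ => ?_
          push_cast
          ring_nf
      _ = Real.log (t + ((Mn : ℝ) + ((n + 1 - Mn : ℕ) : ℝ)) * θ) -
            Real.log (t + ((Mn : ℝ) + (0 : ℝ)) * θ) := by
          have : ∀ j : ℕ, Real.log (t + ((Mn : ℝ) + ((j : ℝ) + 1)) * θ) =
              Real.log (t + ((Mn : ℝ) + ((j + 1 : ℕ) : ℝ)) * θ) := by
            intro j; push_cast; ring_nf
          rw [Finset.sum_congr rfl fun j _ => by rw [this j]]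
          simpa using key
      _ = Real.log (t + ((n : ℝ) + 1) * θ) - Real.log (t + (Mn : ℝ) * θ) := by
          have hcast : ((n + 1 - Mn : ℕ) : ℝ) = (n : ℝ) + 1 - (Mn : ℝ) := by
            have : Mn ≤ n + 1 := by omega
            push_cast [this]
            ring
          rw [hcast]
          ring_nf
  -- Step 4: the master bound for every n
  set A : ℝ := Real.exp (p * Real.log (t + (Mn : ℝ) * θ)) with hA
  have hmain : ∀ n : ℕ,
      (ℙ {ω | ∑ k ∈ Finset.Icc 1 (n + 1), γ ^ (k - 1) * Q k ω ≤ Real.exp t}).toReal ≤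
        A * Real.exp (-(p * Real.log (t + ((n : ℝ) + 1) * θ))) := by
    intro n
    rcases le_or_gt Mn n with hn | hn
    · have hIcc : Finset.Icc 1 (n + 1) = Finset.Ioc 0 (n + 1) := by
        ext x; simp only [Finset.mem_Icc, Finset.mem_Ioc]; omega
      have hsplit : (∏ k ∈ Finset.Ioc 0 Mn, ρ k) * ∏ k ∈ Finset.Ioc Mn (n + 1), ρ k =
          ∏ k ∈ Finset.Ioc 0 (n + 1), ρ k :=
        Finset.prod_Ioc_consecutive ρ (Nat.zero_le Mn) (by omega)
      have hsum_le : p * (Real.log (t + ((n : ℝ) + 1) * θ) - Real.log (t + (Mn : ℝ) * θ)) ≤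
          ∑ k ∈ Finset.Ioc Mn (n + 1), c / (t + ((k : ℝ) - 1) * θ) := by
        rw [← htel n hn, Finset.mul_sum]
        refine Finset.sum_le_sum fun k hk => ?_
        exact hterm k (Finset.mem_Ioc.1 hk).1
      calc (ℙ {ω | ∑ k ∈ Finset.Icc 1 (n + 1), γ ^ (k - 1) * Q k ω ≤ Real.exp t}).toReal
          ≤ ∏ k ∈ Finset.Icc 1 (n + 1), ρ k := hEbound n
        _ = ∏ k ∈ Finset.Ioc 0 (n + 1), ρ k := by rw [hIcc]
        _ = (∏ k ∈ Finset.Ioc 0 Mn, ρ k) * ∏ k ∈ Finset.Ioc Mn (n + 1), ρ k := hsplit.symm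
        _ ≤ 1 * ∏ k ∈ Finset.Ioc Mn (n + 1), ρ k := by
            apply mul_le_mul_of_nonneg_right
            · exact Finset.prod_le_one (fun k _ => hρ0 k) (fun k _ => hρ1 k)
            · exact Finset.prod_nonneg fun k _ => hρ0 k
        _ = ∏ k ∈ Finset.Ioc Mn (n + 1), ρ k := one_mul _
        _ ≤ ∏ k ∈ Finset.Ioc Mn (n + 1), Real.exp (-(c / (t + ((k : ℝ) - 1) * θ))) := by
            refine Finset.prod_le_prod (fun k _ => hρ0 k) fun k hk => ?_
            exact hρexp k (Finset.mem_Ioc.1 hk).1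
        _ = Real.exp (∑ k ∈ Finset.Ioc Mn (n + 1), -(c / (t + ((k : ℝ) - 1) * θ))) :=
            (Real.exp_sum _ _).symm
        _ ≤ Real.exp (-(p * (Real.log (t + ((n : ℝ) + 1) * θ) -
              Real.log (t + (Mn : ℝ) * θ)))) := by
            apply Real.exp_le_exp.2
            rw [Finset.sum_neg_distrib]
            linarith [hsum_le]
        _ = A * Real.exp (-(p * Real.log (t + ((n : ℝ) + 1) * θ))) := by
            rw [hA, ← Real.exp_add]
            ring_nf
    · -- trivial case : n < Mn
      have hb0 : 0 < t + ((n : ℝ) + 1) * θ := by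
        have : (0 : ℝ) ≤ (n : ℝ) := Nat.cast_nonneg n
        nlinarith
      have hmono : Real.log (t + ((n : ℝ) + 1) * θ) ≤ Real.log (t + (Mn : ℝ) * θ) := by
        apply Real.log_le_log hb0
        have : (n : ℝ) + 1 ≤ (Mn : ℝ) := by exact_mod_cast hn
        nlinarith
      have h1 : (ℙ {ω | ∑ k ∈ Finset.Icc 1 (n + 1), γ ^ (k - 1) * Q k ω ≤ Real.exp t}).toReal
          ≤ 1 := by
        have := ENNReal.toReal_mono ENNReal.one_ne_top
          (prob_le_one (μ := (ℙ : Measure Ω))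
            (s := {ω | ∑ k ∈ Finset.Icc 1 (n + 1), γ ^ (k - 1) * Q k ω ≤ Real.exp t}))
        simpa using this
      calc (ℙ {ω | ∑ k ∈ Finset.Icc 1 (n + 1), γ ^ (k - 1) * Q k ω ≤ Real.exp t}).toReal
          ≤ 1 := h1
        _ ≤ Real.exp (p * Real.log (t + (Mn : ℝ) * θ) +
              -(p * Real.log (t + ((n : ℝ) + 1) * θ))) := by
            apply Real.one_le_exp
            nlinarith [hppos.le]
        _ = A * Real.exp (-(p * Real.log (t + ((n : ℝ) + 1) * θ))) := by
            rw [hA, ← Real.exp_add]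
  -- Step 5: summability of the bounding sequence
  have hBsummable : Summable
      (fun n : ℕ => A * Real.exp (-(p * Real.log (t + ((n : ℝ) + 1) * θ)))) := by
    apply Summable.mul_left
    have hrw : ∀ n : ℕ, Real.exp (-(p * Real.log (t + ((n : ℝ) + 1) * θ))) =
        (t + ((n : ℝ) + 1) * θ) ^ (-p) := by
      intro n
      have hb0 : 0 < t + ((n : ℝ) + 1) * θ := by
        have : (0 : ℝ) ≤ (n : ℝ) := Nat.cast_nonneg n
        nlinarith
      rw [Real.rpow_def_of_pos hb0]
      ring_nf
    have hS1 : Summable (fun n : ℕ => ((n : ℝ) + 1) ^ (-p)) := by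
      have hS0 : Summable (fun n : ℕ => (n : ℝ) ^ (-p)) :=
        Real.summable_nat_rpow.2 (by linarith)
      have := (_root_.summable_nat_add_iff 1).2 hS0
      refine this.congr fun n => ?_
      push_cast
      ring_nf
    have hS2 : Summable (fun n : ℕ => θ ^ (-p) * ((n : ℝ) + 1) ^ (-p)) :=
      hS1.mul_left _
    have hle : ∀ n : ℕ, (t + ((n : ℝ) + 1) * θ) ^ (-p) ≤
        θ ^ (-p) * ((n : ℝ) + 1) ^ (-p) := by
      intro n
      have hn1 : (0 : ℝ) < (n : ℝ) + 1 := by positivity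
      have hb1 : 0 < ((n : ℝ) + 1) * θ := by positivity
      have hb2 : ((n : ℝ) + 1) * θ ≤ t + ((n : ℝ) + 1) * θ := by linarith
      calc (t + ((n : ℝ) + 1) * θ) ^ (-p) ≤ (((n : ℝ) + 1) * θ) ^ (-p) :=
            Real.rpow_le_rpow_of_nonpos hb1 hb2 (by linarith)
        _ = ((n : ℝ) + 1) ^ (-p) * θ ^ (-p) := Real.mul_rpow hn1.le hθpos.le
        _ = θ ^ (-p) * ((n : ℝ) + 1) ^ (-p) := by ring
    have hSrpow : Summable (fun n : ℕ => (t + ((n : ℝ) + 1) * θ) ^ (-p)) :=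
      Summable.of_nonneg_of_le
        (fun n => Real.rpow_nonneg (by
          have : (0 : ℝ) ≤ (n : ℝ) := Nat.cast_nonneg n
          nlinarith) _)
        hle hS2
    exact hSrpow.congr fun n => (hrw n).symm
  have hSa : Summable (fun n : ℕ =>
      (ℙ {ω | ∑ k ∈ Finset.Icc 1 (n + 1), γ ^ (k - 1) * Q k ω ≤ Real.exp t}).toReal) :=
    Summable.of_nonneg_of_le (fun n => ENNReal.toReal_nonneg) hmain hBsummable
  -- Step 6: conclude
  calc (∑' n : ℕ, ℙ {ω | ∑ k ∈ Finset.Icc 1 (n + 1), γ ^ (k - 1) * Q k ω ≤ Real.exp t})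
      = ∑' n : ℕ, ENNReal.ofReal
          ((ℙ {ω | ∑ k ∈ Finset.Icc 1 (n + 1), γ ^ (k - 1) * Q k ω ≤ Real.exp t}).toReal) :=
        tsum_congr fun n => (ENNReal.ofReal_toReal (measure_ne_top _ _)).symm
    _ = ENNReal.ofReal (∑' n : ℕ,
          (ℙ {ω | ∑ k ∈ Finset.Icc 1 (n + 1), γ ^ (k - 1) * Q k ω ≤ Real.exp t}).toReal) :=
        (ENNReal.ofReal_tsum_of_nonneg (fun n => ENNReal.toReal_nonneg) hSa).symm
    _ < ⊤ := ENNReal.ofReal_lt_top
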